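/- Let M = (A,B,C,D) be a discrete-time system and X ∈ ℂ^{n×n} Hermitian with X > 0 and Ŵ(X,M) > 0. Write Ŵ(X,M) = RᴴR with R invertible, and set F₁ := R⁻ᴴE₁, F₂ := R⁻ᴴE₂, α := ‖F₁‖₂, β := ‖F₂‖₂ (so α, β > 0). Let u, û, v, v̂ be unit vectors forming dominant singular pairs: F₁u = αû, F₁ᴴû = αu, F₂v = βv̂, F₂ᴴv̂ = βv. Then the X-passivity radius satisfies 1/(2αβ) ≤ ρ_M(X) ≤ 1/((1 + |v̂ᴴû|)·αβ) ≤ 1/(αβ). Moreover, if û and v̂ are linearly dependent, then ρ_M(X) = 1/(2αβ). -/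

import Mathlib

open Matrix
open scoped ComplexOrder

/-- The spectral norm (largest singular value) of a complex matrix. -/
noncomputable def spNorm {k l : Type*} [Fintype k] [Fintype l] [DecidableEq k] [DecidableEq l]
    (A : Matrix k l ℂ) : ℝ :=
  ‖(Matrix.toEuclideanLin A).toContinuousLinearMap‖

/-- The Euclidean norm of a complex vector. -/
noncomputable def vecNorm {k : Type*} [Fintype k] (v : k → ℂ) : ℝ :=
  Real.sqrt (∑ i, ‖v i‖ ^ 2)

open scoped Matrix.Norms.L2Operator

section Aux
variable {k l : Type*} [Fintype k] [Fintype l] [DecidableEq k] [DecidableEq l]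

noncomputable def toE (v : k → ℂ) : EuclideanSpace ℂ k := (WithLp.equiv 2 _).symm v

lemma spNorm_eq (A : Matrix k l ℂ) : spNorm A = ‖A‖ := rfl

lemma vecNorm_eq (v : k → ℂ) : vecNorm v = ‖toE v‖ := by
  rw [vecNorm, EuclideanSpace.norm_eq]
  rfl

lemma vecNorm_nonneg (v : k → ℂ) : 0 ≤ vecNorm v := Real.sqrt_nonneg _

lemma spNorm_nonneg (A : Matrix k l ℂ) : 0 ≤ spNorm A := by rw [spNorm_eq]; exact norm_nonneg _

lemma spNorm_pos {A : Matrix k l ℂ} (h : A ≠ 0) : 0 < spNorm A := by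
  rw [spNorm_eq]; exact norm_pos_iff.mpr h

lemma vecNorm_pos {v : k → ℂ} (h : v ≠ 0) : 0 < vecNorm v := by
  rw [vecNorm_eq]
  refine norm_pos_iff.mpr ?_
  simpa [toE] using h

lemma vecNorm_mulVec_le (A : Matrix k l ℂ) (x : l → ℂ) :
    vecNorm (A *ᵥ x) ≤ spNorm A * vecNorm x := by
  rw [vecNorm_eq, vecNorm_eq, spNorm_eq]
  exact A.l2_opNorm_mulVec (toE x)

lemma spNorm_conjTranspose (A : Matrix k l ℂ) : spNorm Aᴴ = spNorm A := by
  rw [spNorm_eq, spNorm_eq]; exact A.l2_opNorm_conjTranspose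

lemma dot_inner (x y : k → ℂ) : dotProduct (star x) y = inner ℂ (toE x) (toE y) := by
  simp [dotProduct, PiLp.inner_apply, toE, RCLike.inner_apply, mul_comm]

lemma abs_dot_le (x y : k → ℂ) :
    ‖dotProduct (star x) y‖ ≤ vecNorm x * vecNorm y := by
  rw [dot_inner, vecNorm_eq, vecNorm_eq]
  exact norm_inner_le_norm (𝕜 := ℂ) _ _

lemma dot_self (v : k → ℂ) : dotProduct (star v) v = ((vecNorm v) ^ 2 : ℝ) := by
  have h : ∀ i, (starRingEnd ℂ) (v i) * v i = ((‖v i‖ ^ 2 : ℝ) : ℂ) := fun i => by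
    rw [mul_comm, RCLike.mul_conj]; norm_cast
  have hnn : (0:ℝ) ≤ ∑ i, ‖v i‖ ^ 2 :=
    Finset.sum_nonneg fun i _ => sq_nonneg _
  simp only [dotProduct, Pi.star_apply, RCLike.star_def, h]
  rw [← Complex.ofReal_sum]
  norm_cast
  rw [vecNorm, Real.sq_sqrt hnn]

lemma spNorm_smul (c : ℂ) (A : Matrix k l ℂ) : spNorm (c • A) = ‖c‖ * spNorm A := by
  rw [spNorm_eq, spNorm_eq]
  exact norm_smul c A

lemma vecMulVec_mulVec (u : k → ℂ) (w x : l → ℂ) :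
    (Matrix.vecMulVec u w) *ᵥ x = (dotProduct w x) • u := by
  funext i
  simp [Matrix.vecMulVec, Matrix.mulVec, dotProduct, Finset.mul_sum, mul_assoc, mul_comm,
    mul_left_comm]

lemma spNorm_vecMulVec_le (u : k → ℂ) (v : l → ℂ) :
    spNorm (Matrix.vecMulVec u (star v)) ≤ vecNorm u * vecNorm v := by
  rw [spNorm_eq, Matrix.l2_opNorm_def]
  refine ContinuousLinearMap.opNorm_le_bound _
    (mul_nonneg (vecNorm_nonneg u) (vecNorm_nonneg v)) fun x => ?_
  have hx : Matrix.toEuclideanLin (Matrix.vecMulVec u (star v)) x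
      = toE ((Matrix.vecMulVec u (star v)) *ᵥ (WithLp.equiv 2 _ x)) := by
    rw [Matrix.toEuclideanLin_apply]; rfl
  calc ‖(Matrix.toEuclideanLin (Matrix.vecMulVec u (star v))).toContinuousLinearMap x‖
      = vecNorm ((Matrix.vecMulVec u (star v)) *ᵥ (WithLp.equiv 2 _ x)) := by
        rw [vecNorm_eq]
        exact congrArg norm hx
    _ ≤ vecNorm u * vecNorm v * ‖x‖ := by
        rw [_root_.vecMulVec_mulVec, vecNorm_eq]
        have : toE ((dotProduct (star v) (WithLp.equiv 2 _ x)) • u)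
            = (dotProduct (star v) (WithLp.equiv 2 _ x)) • toE u := rfl
        rw [this, norm_smul]
        have h1 : ‖dotProduct (star v) (WithLp.equiv 2 _ x)‖
            ≤ vecNorm v * vecNorm (WithLp.equiv 2 _ x) := by
          exact abs_dot_le v _
        have h2 : vecNorm (WithLp.equiv 2 _ x) = ‖x‖ := by rw [vecNorm_eq]; rfl
        rw [h2] at h1
        calc ‖dotProduct (star v) (WithLp.equiv 2 _ x)‖ * ‖toE u‖
            ≤ (vecNorm v * ‖x‖) * ‖toE u‖ :=
              mul_le_mul_of_nonneg_right h1 (norm_nonneg _)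
          _ = vecNorm u * vecNorm v * ‖x‖ := by rw [← vecNorm_eq]; ring

lemma dot_mulVec_conjT (y : k → ℂ) (M : Matrix k k ℂ) :
    dotProduct (star y) (Mᴴ *ᵥ y) = starRingEnd ℂ (dotProduct (star y) (M *ᵥ y)) := by
  simp only [dotProduct, Matrix.mulVec, Matrix.conjTranspose_apply, dotProduct, map_sum,
    _root_.map_mul, Pi.star_apply, RCLike.star_def, Complex.conj_conj, Finset.mul_sum]
  rw [Finset.sum_comm]
  congr 1; funext i
  congr 1; funext j
  ring

lemma dot_mulVec_left (y : k → ℂ) (M : Matrix k l ℂ) (z : l → ℂ) :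
    dotProduct (star y) (M *ᵥ z) = dotProduct (star (Mᴴ *ᵥ y)) z := by
  rw [Matrix.star_mulVec, Matrix.dotProduct_mulVec, Matrix.conjTranspose_conjTranspose]

end Aux

section Main
set_option linter.unusedSectionVars false

variable {N K : Type*} [Fintype N] [Fintype K] [DecidableEq N] [DecidableEq K]

lemma factor_id (R : Matrix N N ℂ) (E₁ E₂ F₁ F₂ : Matrix N K ℂ)
    (h1 : Rᴴ * F₁ = E₁) (h2 : Rᴴ * F₂ = E₂) (Δ : Matrix K K ℂ) :
    Rᴴ * R + E₁ * Δ * E₂ᴴ + E₂ * Δᴴ * E₁ᴴ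
      = Rᴴ * (1 + F₁ * Δ * F₂ᴴ + F₂ * Δᴴ * F₁ᴴ) * R := by
  have h1' : F₁ᴴ * R = E₁ᴴ := by
    rw [← h1, Matrix.conjTranspose_mul, Matrix.conjTranspose_conjTranspose]
  have h2' : F₂ᴴ * R = E₂ᴴ := by
    rw [← h2, Matrix.conjTranspose_mul, Matrix.conjTranspose_conjTranspose]
  have e1 : Rᴴ * (F₁ * Δ * F₂ᴴ) * R = (Rᴴ * F₁) * Δ * (F₂ᴴ * R) := by
    simp only [Matrix.mul_assoc]
  have e2 : Rᴴ * (F₂ * Δᴴ * F₁ᴴ) * R = (Rᴴ * F₂) * Δᴴ * (F₁ᴴ * R) := by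
    simp only [Matrix.mul_assoc]
  rw [Matrix.mul_add, Matrix.mul_add, Matrix.add_mul, Matrix.add_mul, Matrix.mul_one,
    e1, e2, h1, h2, h1', h2']

lemma lower_per (F₁ F₂ : Matrix N K ℂ) (α β : ℝ) (hα : α = spNorm F₁) (hβ : β = spNorm F₂)
    (hαpos : 0 < α) (hβpos : 0 < β) (Δ : Matrix K K ℂ)
    (hK : (1 + F₁ * Δ * F₂ᴴ + F₂ * Δᴴ * F₁ᴴ).det = 0) :
    1 / (2 * α * β) ≤ spNorm Δ := by
  obtain ⟨y, hy0, hKy⟩ := (Matrix.exists_mulVec_eq_zero_iff).mpr hK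
  have hQ : F₂ * Δᴴ * F₁ᴴ = (F₁ * Δ * F₂ᴴ)ᴴ := by
    simp [Matrix.conjTranspose_mul, Matrix.mul_assoc]
  set P := F₁ * Δ * F₂ᴴ with hP
  set p := dotProduct (star y) (P *ᵥ y) with hp
  have h0 : dotProduct (star y) ((1 + P + Pᴴ) *ᵥ y) = 0 := by
    rw [← hQ]; rw [hKy]; exact dotProduct_zero _
  have hexpand : ((vecNorm y ^ 2 : ℝ) : ℂ) + p + starRingEnd ℂ p = 0 := by
    rw [Matrix.add_mulVec, Matrix.add_mulVec, Matrix.one_mulVec, dotProduct_add,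
      dotProduct_add, dot_self, dot_mulVec_conjT] at h0
    exact h0
  have hre : (vecNorm y) ^ 2 = - (2 * p.re) := by
    have h2 : p + starRingEnd ℂ p = ((2 * p.re : ℝ) : ℂ) := by
      rw [Complex.add_conj]
    rw [add_assoc, h2] at hexpand
    have h3 : (vecNorm y ^ 2 : ℝ) + 2 * p.re = 0 := by exact_mod_cast hexpand
    linarith
  have hvy : 0 < vecNorm y := vecNorm_pos hy0
  have habs : ‖p‖ ≤ (α * vecNorm y) * (spNorm Δ * (β * vecNorm y)) := by
    have hform : p = dotProduct (star (F₁ᴴ *ᵥ y)) (Δ *ᵥ (F₂ᴴ *ᵥ y)) := by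
      rw [hp, hP, ← Matrix.mulVec_mulVec, ← Matrix.mulVec_mulVec, dot_mulVec_left]
    rw [hform]
    calc ‖dotProduct (star (F₁ᴴ *ᵥ y)) (Δ *ᵥ (F₂ᴴ *ᵥ y))‖
        ≤ vecNorm (F₁ᴴ *ᵥ y) * vecNorm (Δ *ᵥ (F₂ᴴ *ᵥ y)) := abs_dot_le _ _
      _ ≤ (α * vecNorm y) * (spNorm Δ * (β * vecNorm y)) := by
          have a1 : vecNorm (F₁ᴴ *ᵥ y) ≤ α * vecNorm y := by
            rw [hα, ← spNorm_conjTranspose]; exact vecNorm_mulVec_le _ _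
          have a2 : vecNorm (F₂ᴴ *ᵥ y) ≤ β * vecNorm y := by
            rw [hβ, ← spNorm_conjTranspose]; exact vecNorm_mulVec_le _ _
          have a3 : vecNorm (Δ *ᵥ (F₂ᴴ *ᵥ y)) ≤ spNorm Δ * (β * vecNorm y) :=
            le_trans (vecNorm_mulVec_le _ _)
              (mul_le_mul_of_nonneg_left a2 (spNorm_nonneg _))
          exact mul_le_mul a1 a3 (vecNorm_nonneg _)
            (mul_nonneg hαpos.le hvy.le)
  have hple : -(2 * p.re) ≤ 2 * ‖p‖ := by
    have := Complex.abs_re_le_norm p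
    have h' := neg_le_abs p.re
    nlinarith
  have key : vecNorm y ^ 2 ≤ 2 * α * β * spNorm Δ * vecNorm y ^ 2 := by
    calc vecNorm y ^ 2 = -(2 * p.re) := hre
      _ ≤ 2 * ‖p‖ := hple
      _ ≤ 2 * ((α * vecNorm y) * (spNorm Δ * (β * vecNorm y))) := by linarith
      _ = 2 * α * β * spNorm Δ * vecNorm y ^ 2 := by ring
  have hv2 : 0 < vecNorm y ^ 2 := by positivity
  have h1le : 1 ≤ 2 * α * β * spNorm Δ := by nlinarith [key, hv2]
  rw [div_le_iff₀ (by positivity)]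
  linarith

end Main

section Helpers2
set_option linter.unusedSectionVars false
variable {k l : Type*} [Fintype k] [Fintype l] [DecidableEq k] [DecidableEq l]

lemma vecMulVec_conjT (u : k → ℂ) (v : l → ℂ) :
    (Matrix.vecMulVec u (star v))ᴴ = Matrix.vecMulVec v (star u) := by
  ext i j
  simp [Matrix.vecMulVec, Matrix.conjTranspose_apply, mul_comm]

lemma dot_star_comm (x y : k → ℂ) :
    dotProduct (star x) y = starRingEnd ℂ (dotProduct (star y) x) := by
  simp [dotProduct, map_sum, _root_.map_mul, mul_comm]

end Helpers2
set_option maxHeartbeats 1000000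

/-- `E₁ = [[I,0],[0,0],[0,I]]`. -/
noncomputable def Emat1 (n m : ℕ) : Matrix (Fin n ⊕ (Fin n ⊕ Fin m)) (Fin n ⊕ Fin m) ℂ :=
  fromBlocks 1 0 (fromRows 0 0) (fromRows 0 1)

/-- `E₂ = [[0,0],[I,0],[0,I]]`. -/
noncomputable def Emat2 (n m : ℕ) : Matrix (Fin n ⊕ (Fin n ⊕ Fin m)) (Fin n ⊕ Fin m) ℂ :=
  fromBlocks 0 0 (fromRows 1 0) (fromRows 0 1)

/-- The matrix `Ŵ(X,M) = [[X⁻¹, A, B],[Aᴴ, X, Cᴴ],[Bᴴ, C, Dᴴ + D]]`. -/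
noncomputable def What {n m : ℕ} (X A : Matrix (Fin n) (Fin n) ℂ)
    (B : Matrix (Fin n) (Fin m) ℂ) (C : Matrix (Fin m) (Fin n) ℂ)
    (D : Matrix (Fin m) (Fin m) ℂ) :
    Matrix (Fin n ⊕ (Fin n ⊕ Fin m)) (Fin n ⊕ (Fin n ⊕ Fin m)) ℂ :=
  fromBlocks X⁻¹ (fromCols A B) (fromRows Aᴴ Bᴴ) (fromBlocks X Cᴴ C (Dᴴ + D))

/-- The `X`-passivity radius: the infimum of the spectral norms of perturbations `Δ` of the
system data making `Ŵ(X,M) + E₁ΔE₂ᴴ + E₂ΔᴴE₁ᴴ` singular. -/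
noncomputable def XPassivityRadius {n m : ℕ} (X A : Matrix (Fin n) (Fin n) ℂ)
    (B : Matrix (Fin n) (Fin m) ℂ) (C : Matrix (Fin m) (Fin n) ℂ)
    (D : Matrix (Fin m) (Fin m) ℂ) : ℝ :=
  sInf {r : ℝ | ∃ Δ : Matrix (Fin n ⊕ Fin m) (Fin n ⊕ Fin m) ℂ,
    (What X A B C D + Emat1 n m * Δ * (Emat2 n m)ᴴ
      + Emat2 n m * Δᴴ * (Emat1 n m)ᴴ).det = 0 ∧ r = spNorm Δ}

/-- bounds for the `X`-passivity radius in terms of the dominant singular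
pairs of `F₁ = R⁻ᴴE₁` and `F₂ = R⁻ᴴE₂`, where `Ŵ(X,M) = RᴴR ≻ 0`:
`1/(2αβ) ≤ ρ_M(X) ≤ 1/((1 + |v̂ᴴû|)αβ) ≤ 1/(αβ)`, with equality `ρ_M(X) = 1/(2αβ)`
when `û`, `v̂` are linearly dependent. -/
theorem stmt7 {n m : ℕ} (A : Matrix (Fin n) (Fin n) ℂ) (B : Matrix (Fin n) (Fin m) ℂ)
    (C : Matrix (Fin m) (Fin n) ℂ) (D : Matrix (Fin m) (Fin m) ℂ)
    (X : Matrix (Fin n) (Fin n) ℂ) (hX : X.PosDef)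
    (hWpd : (What X A B C D).PosDef)
    (R : Matrix (Fin n ⊕ (Fin n ⊕ Fin m)) (Fin n ⊕ (Fin n ⊕ Fin m)) ℂ)
    (hR : IsUnit R) (hfact : What X A B C D = Rᴴ * R)
    (F₁ F₂ : Matrix (Fin n ⊕ (Fin n ⊕ Fin m)) (Fin n ⊕ Fin m) ℂ)
    (hF₁ : F₁ = (Rᴴ)⁻¹ * Emat1 n m) (hF₂ : F₂ = (Rᴴ)⁻¹ * Emat2 n m)
    (α β : ℝ) (hα : α = spNorm F₁) (hβ : β = spNorm F₂)
    (u v : (Fin n ⊕ Fin m) → ℂ) (uh vh : (Fin n ⊕ (Fin n ⊕ Fin m)) → ℂ)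
    (hu : vecNorm u = 1) (hv : vecNorm v = 1)
    (huh : vecNorm uh = 1) (hvh : vecNorm vh = 1)
    (h1 : F₁.mulVec u = (α : ℂ) • uh) (h2 : F₁ᴴ.mulVec uh = (α : ℂ) • u)
    (h3 : F₂.mulVec v = (β : ℂ) • vh) (h4 : F₂ᴴ.mulVec vh = (β : ℂ) • v) :
    1 / (2 * α * β) ≤ XPassivityRadius X A B C D
    ∧ XPassivityRadius X A B C D
        ≤ 1 / ((1 + ‖dotProduct (star vh) uh‖) * (α * β))
    ∧ 1 / ((1 + ‖dotProduct (star vh) uh‖) * (α * β)) ≤ 1 / (α * β)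
    ∧ ((∃ c : ℂ, uh = c • vh) → XPassivityRadius X A B C D = 1 / (2 * α * β)) := by
  classical
  -- basic positivity and nonemptiness facts
  have hne : Nonempty (Fin n ⊕ Fin m) := by
    by_contra h
    rw [not_nonempty_iff] at h
    have h0 : vecNorm u = 0 := by simp [vecNorm]
    rw [hu] at h0
    exact one_ne_zero h0
  have hdetR : IsUnit R.det := (Matrix.isUnit_iff_isUnit_det R).mp hR
  have hdetRH : IsUnit Rᴴ.det := by
    rw [Matrix.det_conjTranspose]; exact hdetR.star
  have hRF1 : Rᴴ * F₁ = Emat1 n m := by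
    rw [hF₁, ← Matrix.mul_assoc, Matrix.mul_nonsing_inv _ hdetRH, Matrix.one_mul]
  have hRF2 : Rᴴ * F₂ = Emat2 n m := by
    rw [hF₂, ← Matrix.mul_assoc, Matrix.mul_nonsing_inv _ hdetRH, Matrix.one_mul]
  have hα0 : 0 < α := by
    rw [hα]
    apply spNorm_pos
    intro hF0
    have hE0 : Emat1 n m = 0 := by rw [← hRF1, hF0, Matrix.mul_zero]
    rcases hne.some with i | j
    · have := congrFun (congrFun hE0 (Sum.inl i)) (Sum.inl i)
      simp [Emat1, Matrix.one_apply] at this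
    · have := congrFun (congrFun hE0 (Sum.inr (Sum.inr j))) (Sum.inr j)
      simp [Emat1, Matrix.one_apply] at this
  have hβ0 : 0 < β := by
    rw [hβ]
    apply spNorm_pos
    intro hF0
    have hE0 : Emat2 n m = 0 := by rw [← hRF2, hF0, Matrix.mul_zero]
    rcases hne.some with i | j
    · have := congrFun (congrFun hE0 (Sum.inr (Sum.inl i))) (Sum.inl i)
      simp [Emat2, Matrix.one_apply] at this
    · have := congrFun (congrFun hE0 (Sum.inr (Sum.inr j))) (Sum.inr j)
      simp [Emat2, Matrix.one_apply] at this
  have hαβ : (0:ℝ) < α * β := mul_pos hα0 hβ0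
  -- determinant equivalence
  have hdet_iff : ∀ Δ : Matrix (Fin n ⊕ Fin m) (Fin n ⊕ Fin m) ℂ,
      (What X A B C D + Emat1 n m * Δ * (Emat2 n m)ᴴ
        + Emat2 n m * Δᴴ * (Emat1 n m)ᴴ).det = 0
      ↔ (1 + F₁ * Δ * F₂ᴴ + F₂ * Δᴴ * F₁ᴴ).det = 0 := by
    intro Δ
    rw [hfact, factor_id R _ _ F₁ F₂ hRF1 hRF2 Δ, Matrix.det_mul, Matrix.det_mul]
    simp [mul_eq_zero, hdetR.ne_zero, hdetRH.ne_zero]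
  -- the set
  set SS : Set ℝ := {r : ℝ | ∃ Δ : Matrix (Fin n ⊕ Fin m) (Fin n ⊕ Fin m) ℂ,
    (What X A B C D + Emat1 n m * Δ * (Emat2 n m)ᴴ
      + Emat2 n m * Δᴴ * (Emat1 n m)ᴴ).det = 0 ∧ r = spNorm Δ} with hSS
  have hrad : XPassivityRadius X A B C D = sInf SS := rfl
  have hS_lb : ∀ r ∈ SS, 1 / (2 * α * β) ≤ r := by
    rintro r ⟨Δ, hΔ, rfl⟩
    exact lower_per F₁ F₂ α β hα hβ hα0 hβ0 Δ ((hdet_iff Δ).mp hΔ)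
  have hbdd : BddBelow SS := ⟨1 / (2 * α * β), fun r hr => hS_lb r hr⟩
  -- setting up the witness
  set s : ℂ := dotProduct (star vh) uh with hsdef
  set sa : ℝ := ‖s‖ with hsadef
  have hsa0 : 0 ≤ sa := norm_nonneg s
  obtain ⟨a, has, hac, haa⟩ :
      ∃ a : ℂ, a * s = (sa : ℂ) ∧ starRingEnd ℂ a * starRingEnd ℂ s = (sa : ℂ)
        ∧ ‖a‖ = 1 := by
    rcases eq_or_ne s 0 with h | h
    · refine ⟨1, ?_, ?_, ?_⟩ <;> simp [h, hsadef]
    · have hsane : sa ≠ 0 := by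
        rw [hsadef]; exact norm_ne_zero_iff.mpr h
      have hsaC : ((sa : ℝ) : ℂ) ≠ 0 := Complex.ofReal_ne_zero.mpr hsane
      have hcs : starRingEnd ℂ s * s = ((sa ^ 2 : ℝ) : ℂ) := by
        rw [mul_comm, Complex.mul_conj, Complex.normSq_eq_norm_sq, hsadef]
      refine ⟨starRingEnd ℂ s / (sa : ℂ), ?_, ?_, ?_⟩
      · rw [div_mul_eq_mul_div, hcs]
        rw [sq]
        push_cast
        field_simp
      · rw [map_div₀, Complex.conj_conj, Complex.conj_ofReal, div_mul_eq_mul_div,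
          mul_comm, hcs, sq]
        push_cast
        field_simp
      · rw [norm_div, Complex.norm_conj, Complex.norm_real, Real.norm_eq_abs, abs_of_nonneg hsa0, ← hsadef,
          div_self hsane]
  have haa1 : starRingEnd ℂ a * a = 1 := by
    rw [mul_comm, Complex.mul_conj, Complex.normSq_eq_norm_sq, haa]
    norm_num
  -- the scalar t and perturbation
  have hden : (0:ℝ) < (1 + sa) * (α * β) := by positivity
  set t : ℝ := 1 / ((1 + sa) * (α * β)) with htdef
  have ht0 : 0 < t := by positivity
  have ht : t * ((1 + sa) * (α * β)) = 1 := by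
    rw [htdef]; field_simp
  have htC : ((t : ℝ) : ℂ) * ((1 + (sa:ℂ)) * ((α:ℂ) * (β:ℂ))) = 1 := by
    exact_mod_cast ht
  set γ : ℂ := -(t : ℂ) * a with hγdef
  set Δ₀ : Matrix (Fin n ⊕ Fin m) (Fin n ⊕ Fin m) ℂ := γ • Matrix.vecMulVec u (star v)
    with hΔ₀def
  set w : (Fin n ⊕ (Fin n ⊕ Fin m)) → ℂ := a • uh + vh with hwdef
  -- dot product facts
  have hvhvh : dotProduct (star vh) vh = 1 := by
    rw [dot_self, hvh]; norm_num
  have huhuh : dotProduct (star uh) uh = 1 := by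
    rw [dot_self, huh]; norm_num
  have huhvh : dotProduct (star uh) vh = starRingEnd ℂ s := by
    rw [dot_star_comm, ← hsdef]
  have hvw : dotProduct (star vh) w = a * s + 1 := by
    rw [hwdef, dotProduct_add, dotProduct_smul, ← hsdef, hvhvh, smul_eq_mul]
  have huw : dotProduct (star uh) w = a + starRingEnd ℂ s := by
    rw [hwdef, dotProduct_add, dotProduct_smul, huhuh, huhvh, smul_eq_mul, mul_one]
  -- P applied to w
  have hPw : (F₁ * Δ₀ * F₂ᴴ) *ᵥ w = (γ * ((β:ℂ) * (a * s + 1)) * (α:ℂ)) • uh := by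
    have hdot : dotProduct (star v) (F₂ᴴ *ᵥ w) = (β:ℂ) * (a * s + 1) := by
      rw [dot_mulVec_left v F₂ᴴ w, Matrix.conjTranspose_conjTranspose, h3, star_smul,
        smul_dotProduct, hvw]
      simp [Complex.conj_ofReal, smul_eq_mul]
    rw [← Matrix.mulVec_mulVec, ← Matrix.mulVec_mulVec, hΔ₀def, Matrix.smul_mulVec,
      _root_.vecMulVec_mulVec, hdot, Matrix.mulVec_smul, Matrix.mulVec_smul, h1, smul_smul, smul_smul]
  have hQw : (F₂ * Δ₀ᴴ * F₁ᴴ) *ᵥ w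
      = (starRingEnd ℂ γ * ((α:ℂ) * (a + starRingEnd ℂ s)) * (β:ℂ)) • vh := by
    have hΔ₀H : Δ₀ᴴ = starRingEnd ℂ γ • Matrix.vecMulVec v (star u) := by
      rw [hΔ₀def, Matrix.conjTranspose_smul, vecMulVec_conjT]
      rfl
    have hdot : dotProduct (star u) (F₁ᴴ *ᵥ w) = (α:ℂ) * (a + starRingEnd ℂ s) := by
      rw [dot_mulVec_left u F₁ᴴ w, Matrix.conjTranspose_conjTranspose, h1, star_smul,
        smul_dotProduct, huw]
      simp [Complex.conj_ofReal, smul_eq_mul]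
    rw [← Matrix.mulVec_mulVec, ← Matrix.mulVec_mulVec, hΔ₀H, Matrix.smul_mulVec,
      _root_.vecMulVec_mulVec, hdot, Matrix.mulVec_smul, Matrix.mulVec_smul, h3, smul_smul, smul_smul]
  -- the scalars
  have hscalar1 : γ * ((β:ℂ) * (a * s + 1)) * (α:ℂ) = -a := by
    rw [hγdef, has]
    push_cast
    linear_combination (-a) * htC
  have hscalar2 : starRingEnd ℂ γ * ((α:ℂ) * (a + starRingEnd ℂ s)) * (β:ℂ) = -1 := by
    have hγc : starRingEnd ℂ γ = -(t:ℂ) * starRingEnd ℂ a := by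
      rw [hγdef]
      simp [Complex.conj_ofReal]
    have hsum : starRingEnd ℂ a * (a + starRingEnd ℂ s) = 1 + (sa : ℂ) := by
      rw [mul_add, haa1, hac]
    rw [hγc]
    linear_combination (-(t:ℂ) * (α:ℂ) * (β:ℂ)) * hsum - htC
  -- K * w = 0
  have hKw : (1 + F₁ * Δ₀ * F₂ᴴ + F₂ * Δ₀ᴴ * F₁ᴴ) *ᵥ w = 0 := by
    rw [Matrix.add_mulVec, Matrix.add_mulVec, Matrix.one_mulVec, hPw, hQw, hscalar1, hscalar2,
      hwdef]
    module
  have hw0 : w ≠ 0 := by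
    intro h
    have h0 : dotProduct (star vh) w = 0 := by rw [h, dotProduct_zero]
    rw [hvw, has] at h0
    have : (sa + 1 : ℝ) = 0 := by exact_mod_cast h0
    linarith
  have hdetK : (1 + F₁ * Δ₀ * F₂ᴴ + F₂ * Δ₀ᴴ * F₁ᴴ).det = 0 :=
    (Matrix.exists_mulVec_eq_zero_iff).mp ⟨w, hw0, hKw⟩
  have hmem : spNorm Δ₀ ∈ SS := ⟨Δ₀, (hdet_iff Δ₀).mpr hdetK, rfl⟩
  -- norm of the witness
  have hΔ₀le : spNorm Δ₀ ≤ t := by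
    rw [hΔ₀def, spNorm_smul]
    have hγabs : ‖γ‖ = t := by
      simp only [hγdef, norm_mul, norm_neg, Complex.norm_real, Real.norm_eq_abs,
        abs_of_nonneg ht0.le, haa, mul_one]
    rw [hγabs]
    calc t * spNorm (Matrix.vecMulVec u (star v))
        ≤ t * (vecNorm u * vecNorm v) :=
          mul_le_mul_of_nonneg_left (spNorm_vecMulVec_le u v) ht0.le
      _ = t := by rw [hu, hv]; ring
  -- the four statements
  have hlow : 1 / (2 * α * β) ≤ XPassivityRadius X A B C D := by
    rw [hrad]
    exact le_csInf ⟨spNorm Δ₀, hmem⟩ hS_lb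
  have hup : XPassivityRadius X A B C D ≤ 1 / ((1 + sa) * (α * β)) := by
    rw [hrad]
    exact le_trans (csInf_le hbdd hmem) hΔ₀le
  refine ⟨hlow, hup, ?_, ?_⟩
  · apply one_div_le_one_div_of_le hαβ
    nlinarith
  · rintro ⟨c, hc⟩
    have hsc : s = c := by
      rw [hsdef, hc, dotProduct_smul, hvhvh, smul_eq_mul, mul_one]
    have hcabs : ‖c‖ = 1 := by
      have hnorm : vecNorm uh = ‖c‖ * vecNorm vh := by
        rw [hc, vecNorm_eq, vecNorm_eq]
        have hEq : toE (c • vh) = c • toE vh := rfl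
        rw [hEq, norm_smul]
      rw [huh, hvh, mul_one] at hnorm
      exact hnorm.symm
    have hsa1 : sa = 1 := by rw [hsadef, hsc, hcabs]
    have heq : 1 / ((1 + sa) * (α * β)) = 1 / (2 * α * β) := by
      rw [hsa1]; ring_nf
    exact le_antisymm (heq ▸ hup) hlow
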